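/- Let X be a finite CW complex and n ≥ 0. Then the n-skeleton Xⁿ is a neighborhood deformation retract of the (n+1)-skeleton Xⁿ⁺¹: there exists a set U with Xⁿ ⊆ U ⊆ Xⁿ⁺¹, open in the subspace topology of Xⁿ⁺¹, and a continuous map H : U × [0,1] → Xⁿ⁺¹ such that H(u, 0) = u for all u ∈ U, H(u, 1) ∈ Xⁿ for all u ∈ U, and H(s, t) = s for all s ∈ Xⁿ and t ∈ [0,1]. -/

import Mathlib

open Metric

/-- A CW-complex structure (in the classical sense) on a topological space `X`:
a family of cells given by characteristic maps from closed unit balls, each a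
homeomorphism of the open ball onto its image, such that the open cells are
pairwise disjoint and partition `X`, and the image of the boundary sphere of every
`n`-cell is contained in the union of the open cells of dimension `< n`
(the `(n-1)`-skeleton). -/
structure ClassicalCWComplex (X : Type*) [TopologicalSpace X] where
  /-- the index type of the `n`-cells -/
  cell : ℕ → Type
  /-- the characteristic map of each `n`-cell. -/
  map : (n : ℕ) → cell n → EuclideanSpace ℝ (Fin n) → X
  /-- characteristic maps are continuous on the closed unit ball -/
  continuousOn : ∀ n i, ContinuousOn (map n i) (closedBall 0 1)
  /-- each characteristic map restricts to a homeomorphism of the open unit ball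
  onto the open cell: it has a continuous partial inverse there -/
  symm : ∀ n i, ∃ g : X → EuclideanSpace ℝ (Fin n),
    ContinuousOn g (map n i '' ball 0 1) ∧
    ∀ x ∈ ball (0 : EuclideanSpace ℝ (Fin n)) 1, g (map n i x) = x
  /-- the open cells are pairwise disjoint -/
  pairwiseDisjoint' : ∀ (n : ℕ) (i : cell n) (m : ℕ) (j : cell m),
    (⟨n, i⟩ : Σ k, cell k) ≠ ⟨m, j⟩ →
      Disjoint (map n i '' ball 0 1) (map m j '' ball 0 1)
  /-- the open cells cover `X` -/
  union' : ⋃ (n : ℕ) (i : cell n), map n i '' ball 0 1 = Set.univ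
  /-- the image of the boundary sphere of an `n`-cell lies in the union of the
  open cells of dimension `< n` -/
  mapsTo' : ∀ n i, map n i '' sphere 0 1 ⊆
    ⋃ (m : ℕ) (_ : m < n) (j : cell m), map m j '' ball 0 1

namespace ClassicalCWComplex

variable {X : Type*} [TopologicalSpace X] (K : ClassicalCWComplex X)

/-- The open cell of dimension `n` and index `i`. -/
def openCell (n : ℕ) (i : K.cell n) : Set X := K.map n i '' ball 0 1

/-- The `m`-skeleton: the union of the open cells of dimension at most `m`. -/
def skeleton (m : ℕ) : Set X :=
  ⋃ (n : ℕ) (_ : n ≤ m) (i : K.cell n), K.openCell n i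

end ClassicalCWComplex


section Rscale

set_option linter.unusedSectionVars false
variable {E : Type*} [NormedAddCommGroup E] [NormedSpace ℝ E]

/-- radial rescaling pushing `x` towards the unit sphere at time `t`. -/
noncomputable def rscale (t : ℝ) (x : E) : E := ((1 - t) + t * ‖x‖)⁻¹ • x

lemma rscale_denom_pos {t : ℝ} (ht : t ∈ Set.Icc (0:ℝ) 1) {x : E} (hx : x ≠ 0) :
    0 < (1 - t) + t * ‖x‖ := by
  have h1 : (0:ℝ) < ‖x‖ := norm_pos_iff.2 hx
  rcases lt_or_eq_of_le ht.2 with h | h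
  · nlinarith [ht.1]
  · nlinarith [ht.1]

lemma rscale_zero (x : E) : rscale 0 x = x := by
  simp [rscale]

lemma rscale_of_norm_one {t : ℝ} {x : E} (hx : ‖x‖ = 1) : rscale t x = x := by
  simp [rscale, hx]

lemma norm_rscale {t : ℝ} (ht : t ∈ Set.Icc (0:ℝ) 1) {x : E} (hx : x ≠ 0) :
    ‖rscale t x‖ = ((1 - t) + t * ‖x‖)⁻¹ * ‖x‖ := by
  rw [rscale, norm_smul, Real.norm_eq_abs, abs_inv, abs_of_pos (rscale_denom_pos ht hx)]

lemma rscale_mem_closedBall {t : ℝ} (ht : t ∈ Set.Icc (0:ℝ) 1) {x : E}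
    (hx : x ∈ closedBall (0:E) 1) (hx0 : x ≠ 0) : rscale t x ∈ closedBall (0:E) 1 := by
  have hd := rscale_denom_pos ht hx0
  rw [mem_closedBall_zero_iff] at hx ⊢
  rw [norm_rscale ht hx0]
  rw [inv_mul_le_iff₀ hd, mul_one]
  nlinarith [ht.1, ht.2]

lemma rscale_one_mem_sphere {x : E} (hx0 : x ≠ 0) : rscale 1 x ∈ sphere (0:E) 1 := by
  have h1 : (0:ℝ) < ‖x‖ := norm_pos_iff.2 hx0
  rw [mem_sphere_zero_iff_norm, norm_rscale (by constructor <;> norm_num) hx0]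
  field_simp
  ring

lemma continuousOn_rscale :
    ContinuousOn (fun p : E × ℝ => rscale p.2 p.1)
      {p : E × ℝ | p.1 ≠ 0 ∧ p.2 ∈ Set.Icc (0:ℝ) 1} := by
  apply ContinuousOn.smul
  · apply ContinuousOn.inv₀
    · fun_prop
    · intro p hp
      exact (rscale_denom_pos hp.2 hp.1).ne'
  · fun_prop

end Rscale

namespace ClassicalCWComplex

variable {X : Type*} [TopologicalSpace X] (K : ClassicalCWComplex X)

/-- The closed cell of dimension `n` and index `i`. -/
def closedCell (n : ℕ) (i : K.cell n) : Set X := K.map n i '' closedBall 0 1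

/-- A choice of partial inverse to the characteristic map. -/
noncomputable def pinv (n : ℕ) (i : K.cell n) : X → EuclideanSpace ℝ (Fin n) :=
  (K.symm n i).choose

lemma continuousOn_pinv (n : ℕ) (i : K.cell n) :
    ContinuousOn (K.pinv n i) (K.openCell n i) :=
  (K.symm n i).choose_spec.1

lemma pinv_map (n : ℕ) (i : K.cell n) {x : EuclideanSpace ℝ (Fin n)}
    (hx : x ∈ ball 0 1) : K.pinv n i (K.map n i x) = x :=
  (K.symm n i).choose_spec.2 x hx

lemma map_injOn_ball (n : ℕ) (i : K.cell n) : Set.InjOn (K.map n i) (ball 0 1) := by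
  intro x hx y hy h
  rw [← K.pinv_map n i hx, ← K.pinv_map n i hy, h]

lemma openCell_subset_skeleton {m k : ℕ} (h : m ≤ k) (i : K.cell m) :
    K.openCell m i ⊆ K.skeleton k := fun x hx => by
  simp only [skeleton, Set.mem_iUnion]
  exact ⟨m, h, i, hx⟩

lemma mapSphere_subset_skeleton {m k : ℕ} (h : m ≤ k + 1) (i : K.cell m) :
    K.map m i '' sphere 0 1 ⊆ K.skeleton k := by
  refine (K.mapsTo' m i).trans ?_
  intro x hx
  simp only [Set.mem_iUnion] at hx
  obtain ⟨l, hl, j, hj⟩ := hx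
  exact K.openCell_subset_skeleton (by omega) j hj

lemma closedCell_subset_skeleton {m k : ℕ} (h : m ≤ k) (i : K.cell m) :
    K.closedCell m i ⊆ K.skeleton k := by
  intro x hx
  obtain ⟨y, hy, rfl⟩ := hx
  rcases lt_or_eq_of_le (mem_closedBall_zero_iff.mp hy) with hy' | hy'
  · exact K.openCell_subset_skeleton h i ⟨y, mem_ball_zero_iff.2 hy', rfl⟩
  · exact K.mapSphere_subset_skeleton (by omega) i ⟨y, mem_sphere_zero_iff_norm.2 hy', rfl⟩

lemma finite_cell (hfin : Finite (Σ n, K.cell n)) (m : ℕ) : Finite (K.cell m) :=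
  Finite.of_injective (fun i => (⟨m, i⟩ : Σ k, K.cell k)) sigma_mk_injective

lemma isCompact_closedCell (n : ℕ) (i : K.cell n) : IsCompact (K.closedCell n i) :=
  (isCompact_closedBall _ _).image_of_continuousOn (K.continuousOn n i)

lemma isClosed_skeleton [T2Space X] (hfin : Finite (Σ n, K.cell n)) (k : ℕ) :
    IsClosed (K.skeleton k) := by
  have : K.skeleton k = ⋃ (m : ℕ) (_ : m ≤ k) (i : K.cell m), K.closedCell m i := by
    apply Set.Subset.antisymm
    · refine Set.iUnion_mono fun m => Set.iUnion_mono fun hm => Set.iUnion_mono fun i => ?_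
      exact Set.image_mono ball_subset_closedBall
    · simp only [Set.iUnion_subset_iff]
      intro m hm i
      exact K.closedCell_subset_skeleton hm i
  rw [this]
  have : ∀ m, Finite (K.cell m) := K.finite_cell hfin
  refine (Set.finite_Iic k).isClosed_biUnion fun m _ => isClosed_iUnion_of_finite
    fun i => (K.isCompact_closedCell m i).isClosed

lemma disjoint_openCell_skeleton {m : ℕ} (j : K.cell (m + 1)) :
    Disjoint (K.openCell (m + 1) j) (K.skeleton m) := by
  simp only [skeleton, Set.disjoint_iUnion_right]
  intro l hl i
  exact K.pairwiseDisjoint' (m + 1) j l i (by simp; omega)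

/-- the set of "centers" of the `(n+1)`-cells. -/
def centers (n : ℕ) : Set X := Set.range fun j : K.cell (n + 1) => K.map (n + 1) j 0

/-- the neighborhood of the `n`-skeleton: everything except the cell centers. -/
def nbhd (n : ℕ) : Set X := K.skeleton (n + 1) \ K.centers n

lemma skeleton_subset_nbhd (n : ℕ) : K.skeleton n ⊆ K.nbhd n := by
  intro u hu
  constructor
  · simp only [skeleton, Set.mem_iUnion] at hu ⊢
    obtain ⟨m, hm, i, hi⟩ := hu
    exact ⟨m, by omega, i, hi⟩
  · rintro ⟨j, rfl⟩
    exact (K.disjoint_openCell_skeleton j).le_bot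
      ⟨⟨0, mem_ball_self one_pos, rfl⟩, hu⟩ |>.elim

lemma nbhd_cases {n : ℕ} {u : X} (hu : u ∈ K.nbhd n) :
    u ∈ K.skeleton n ∨ ∃ (j : K.cell (n + 1)) (x : EuclideanSpace ℝ (Fin (n + 1))),
      x ∈ ball 0 1 ∧ x ≠ 0 ∧ u = K.map (n + 1) j x := by
  obtain ⟨hu1, hu2⟩ := hu
  simp only [skeleton, Set.mem_iUnion] at hu1
  obtain ⟨m, hm, i, hi⟩ := hu1
  rcases Nat.lt_or_ge m (n + 1) with h | h
  · exact Or.inl (K.openCell_subset_skeleton (by omega) i hi)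
  · have hm' : m = n + 1 := by omega
    subst hm'
    obtain ⟨x, hx, rfl⟩ := hi
    refine Or.inr ⟨i, x, hx, ?_, rfl⟩
    rintro rfl
    exact hu2 ⟨i, rfl⟩

open Classical in
/-- the deformation map, on ambient product space. -/
noncomputable def defo (n : ℕ) (p : X × ℝ) : X :=
  if h : ∃ q : EuclideanSpace ℝ (Fin (n + 1)) × K.cell (n + 1),
      q.1 ∈ ball (0 : EuclideanSpace ℝ (Fin (n + 1))) 1 ∧ q.1 ≠ 0 ∧
        p.1 = K.map (n + 1) q.2 q.1
  then K.map (n + 1) h.choose.2 (rscale p.2 h.choose.1)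
  else p.1

lemma defo_of_mem_skeleton {n : ℕ} {u : X} (hu : u ∈ K.skeleton n) (t : ℝ) :
    K.defo n (u, t) = u := by
  rw [defo, dif_neg]
  rintro ⟨⟨x, j⟩, hx, hx0, rfl⟩
  exact (K.disjoint_openCell_skeleton j).le_bot ⟨⟨x, hx, rfl⟩, hu⟩

lemma defo_eq {n : ℕ} (j : K.cell (n + 1)) {x : EuclideanSpace ℝ (Fin (n + 1))}
    (hx : x ∈ ball 0 1) (hx0 : x ≠ 0) (t : ℝ) :
    K.defo n (K.map (n + 1) j x, t) = K.map (n + 1) j (rscale t x) := by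
  rw [defo]
  have h : ∃ q : EuclideanSpace ℝ (Fin (n + 1)) × K.cell (n + 1),
      q.1 ∈ ball (0 : EuclideanSpace ℝ (Fin (n + 1))) 1 ∧ q.1 ≠ 0 ∧
        (K.map (n + 1) j x, t).1 = K.map (n + 1) q.2 q.1 := ⟨(x, j), hx, hx0, rfl⟩
  rw [dif_pos h]
  obtain ⟨hx', hx0', heq⟩ := h.choose_spec
  have hj : h.choose.2 = j := by
    by_contra hne
    refine (K.pairwiseDisjoint' (n+1) h.choose.2 (n+1) j ?_).le_bot
      ⟨⟨h.choose.1, hx', rfl⟩, ⟨x, hx, heq⟩⟩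
    simp only [ne_eq, Sigma.mk.inj_iff, heq_eq_eq]
    tauto
  rw [hj] at heq ⊢
  rw [K.map_injOn_ball (n+1) j hx' hx heq.symm]

lemma continuousOn_defo [T2Space X] (hfin : Finite (Σ n, K.cell n)) (n : ℕ) :
    ContinuousOn (K.defo n) (K.nbhd n ×ˢ Set.Icc (0:ℝ) 1) := by
  haveI : ∀ m, Finite (K.cell m) := K.finite_cell hfin
  rw [continuousOn_iff_isClosed]
  intro C hC
  set T' : K.cell (n+1) → Set (EuclideanSpace ℝ (Fin (n+1)) × ℝ) := fun j =>
    {q | q.1 ∈ closedBall 0 1 ∧ q.1 ≠ 0 ∧ q.2 ∈ Set.Icc (0:ℝ) 1 ∧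
      K.map (n+1) j (rscale q.2 q.1) ∈ C} with hT'
  set Z : K.cell (n+1) → Set (X × ℝ) := fun j =>
    (fun q : EuclideanSpace ℝ (Fin (n+1)) × ℝ => (K.map (n+1) j q.1, q.2)) ''
      closure (T' j) with hZ
  -- continuity of the radial flow on each cell
  have φcont : ∀ j : K.cell (n+1),
      ContinuousOn (fun q : EuclideanSpace ℝ (Fin (n+1)) × ℝ =>
        K.map (n+1) j (rscale q.2 q.1))
        {q | q.1 ∈ closedBall 0 1 ∧ q.1 ≠ 0 ∧ q.2 ∈ Set.Icc (0:ℝ) 1} := by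
    intro j
    refine (K.continuousOn (n+1) j).comp
      (continuousOn_rscale.mono fun q hq => ⟨hq.2.1, hq.2.2⟩) ?_
    intro q hq
    exact rscale_mem_closedBall hq.2.2 hq.1 hq.2.1
  have hsub : ∀ j, closure (T' j) ⊆ closedBall 0 1 ×ˢ Set.Icc (0:ℝ) 1 := fun j =>
    closure_minimal (fun q hq => ⟨hq.1, hq.2.2.1⟩)
      ((isCompact_closedBall _ _).isClosed.prod isClosed_Icc)
  -- points of the closure with nonzero first coordinate lie in `T' j`
  have key : ∀ j, ∀ q ∈ closure (T' j), q.1 ≠ 0 → q ∈ T' j := by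
    intro j q hq hq0
    obtain ⟨D, hD, hDeq⟩ := continuousOn_iff_isClosed.1 (φcont j) C hC
    have hTeq : T' j = D ∩ {q | q.1 ∈ closedBall 0 1 ∧ q.1 ≠ 0 ∧ q.2 ∈ Set.Icc (0:ℝ) 1} := by
      rw [← hDeq]
      ext q
      simp only [hT', Set.mem_inter_iff, Set.mem_preimage, Set.mem_setOf_eq]
      tauto
    have hqD : q ∈ D := by
      have : closure (T' j) ⊆ D := by
        refine closure_minimal ?_ hD
        rw [hTeq]; exact Set.inter_subset_left
      exact this hq
    have hqW := hsub j hq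
    rw [hTeq]
    exact ⟨hqD, hqW.1, hq0, hqW.2⟩
  have hZclosed : ∀ j, IsClosed (Z j) := by
    intro j
    have hcomp : IsCompact (closure (T' j)) :=
      ((isCompact_closedBall _ _).prod isCompact_Icc).of_isClosed_subset
        isClosed_closure (hsub j)
    refine (hcomp.image_of_continuousOn ?_).isClosed
    exact ((K.continuousOn (n+1) j).comp continuous_fst.continuousOn
      fun q hq => (hsub j hq).1).prodMk continuous_snd.continuousOn
  refine ⟨(K.skeleton n ∩ C) ×ˢ (Set.univ : Set ℝ) ∪ ⋃ j, Z j,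
    IsClosed.union (((K.isClosed_skeleton hfin n).inter hC).prod isClosed_univ)
      (isClosed_iUnion_of_finite hZclosed), ?_⟩
  ext ⟨u, t⟩
  simp only [Set.mem_inter_iff, Set.mem_preimage, Set.mem_prod, Set.mem_union,
    Set.mem_iUnion, Set.mem_univ, and_true]
  constructor
  · rintro ⟨hC', hu, ht⟩
    refine ⟨?_, hu, ht⟩
    rcases K.nbhd_cases hu with h | ⟨j, x, hx, hx0, rfl⟩
    · left
      exact ⟨h, by rwa [K.defo_of_mem_skeleton h] at hC'⟩
    · right
      refine ⟨j, (x, t), subset_closure ?_, rfl⟩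
      exact ⟨ball_subset_closedBall hx, hx0, ht,
        by rwa [K.defo_eq j hx hx0 t] at hC'⟩
  · rintro ⟨h, hu, ht⟩
    refine ⟨?_, hu, ht⟩
    rcases h with ⟨hsk, hCu⟩ | ⟨j, ⟨x, s⟩, hmem, heq⟩
    · rw [K.defo_of_mem_skeleton hsk]; exact hCu
    · rw [Prod.mk.injEq] at heq
      obtain ⟨rfl, rfl⟩ := heq
      have hx0 : x ≠ 0 := by
        rintro rfl
        exact hu.2 ⟨j, rfl⟩
      have hT := key j (x, s) hmem hx0
      obtain ⟨hxcb, -, hsI, hCC⟩ := hT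
      rcases lt_or_eq_of_le (mem_closedBall_zero_iff.mp hxcb) with hlt | heq1
      · rwa [K.defo_eq j (mem_ball_zero_iff.2 hlt) hx0 s]
      · have hsph : K.map (n+1) j x ∈ K.skeleton n :=
          K.mapSphere_subset_skeleton le_rfl j ⟨x, mem_sphere_zero_iff_norm.2 heq1, rfl⟩
        rw [K.defo_of_mem_skeleton hsph]
        rwa [rscale_of_norm_one heq1] at hCC

end ClassicalCWComplex

/-- In a finite CW complex, the `n`-skeleton is a neighborhood
deformation retract of the `(n+1)`-skeleton: there is a set `U` with
`Xⁿ ⊆ U ⊆ Xⁿ⁺¹`, open in the subspace topology of `Xⁿ⁺¹`, and a homotopy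
`H : U × [0,1] → Xⁿ⁺¹` starting at the inclusion, ending inside `Xⁿ`, and fixing
`Xⁿ` pointwise at all times. -/
theorem stmt6 {X : Type*} [TopologicalSpace X] [T2Space X]
    (K : ClassicalCWComplex X) (hfin : Finite (Σ n, K.cell n)) (n : ℕ) :
    ∃ U : Set X, K.skeleton n ⊆ U ∧ U ⊆ K.skeleton (n + 1) ∧
      -- `U` is open in the subspace topology of the `(n+1)`-skeleton:
      (∃ V : Set X, IsOpen V ∧ U = V ∩ K.skeleton (n + 1)) ∧
      ∃ H : U × unitInterval → X, Continuous H ∧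
        (∀ u : U, ∀ t : unitInterval, H (u, t) ∈ K.skeleton (n + 1)) ∧
        (∀ u : U, H (u, 0) = u) ∧
        (∀ u : U, H (u, 1) ∈ K.skeleton n) ∧
        (∀ u : U, (u : X) ∈ K.skeleton n → ∀ t : unitInterval, H (u, t) = u) := by
  haveI : ∀ m, Finite (K.cell m) := K.finite_cell hfin
  refine ⟨K.nbhd n, K.skeleton_subset_nbhd n, fun u hu => hu.1,
    ⟨(K.centers n)ᶜ, ((Set.finite_range _).isClosed).isOpen_compl, by
      rw [ClassicalCWComplex.nbhd, Set.diff_eq, Set.inter_comm]⟩,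
    fun p => K.defo n (p.1.1, p.2.1), ?_, ?_, ?_, ?_, ?_⟩
  · refine (K.continuousOn_defo hfin n).comp_continuous ?_ ?_
    · exact (continuous_subtype_val.comp continuous_fst).prodMk
        (continuous_subtype_val.comp continuous_snd)
    · exact fun p => ⟨p.1.2, p.2.2⟩
  · intro u t
    show K.defo n ((u : X), (t : ℝ)) ∈ K.skeleton (n + 1)
    rcases K.nbhd_cases u.2 with h | ⟨j, x, hx, hx0, hux⟩
    · rw [K.defo_of_mem_skeleton h]
      exact (K.skeleton_subset_nbhd n h).1
    · simp only [hux]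
      rw [K.defo_eq j hx hx0]
      exact K.closedCell_subset_skeleton le_rfl j
        ⟨rscale (t : ℝ) x, rscale_mem_closedBall t.2 (ball_subset_closedBall hx) hx0, rfl⟩
  · intro u
    show K.defo n ((u : X), ((0 : unitInterval) : ℝ)) = (u : X)
    rcases K.nbhd_cases u.2 with h | ⟨j, x, hx, hx0, hux⟩
    · exact K.defo_of_mem_skeleton h _
    · simp only [hux]
      rw [show (((0 : unitInterval) : ℝ)) = (0:ℝ) from rfl, K.defo_eq j hx hx0, rscale_zero]
  · intro u
    show K.defo n ((u : X), ((1 : unitInterval) : ℝ)) ∈ K.skeleton n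
    rcases K.nbhd_cases u.2 with h | ⟨j, x, hx, hx0, hux⟩
    · rw [K.defo_of_mem_skeleton h]; exact h
    · simp only [hux]
      rw [show (((1 : unitInterval) : ℝ)) = (1:ℝ) from rfl, K.defo_eq j hx hx0]
      exact K.mapSphere_subset_skeleton le_rfl j
        ⟨rscale 1 x, rscale_one_mem_sphere hx0, rfl⟩
  · intro u hu t
    show K.defo n ((u : X), (t : ℝ)) = (u : X)
    exact K.defo_of_mem_skeleton hu _
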